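/- Let q_t(x) = 1_{x>0} (ct/√(2π)) x^{−3/2} exp(−γ²(x − (c/γ)t)²/(2x)) be the inverse-Gaussian density with parameters c, γ > 0. Then the bridge marginal density q_t(y) q_{T−t}(z−y)/q_T(z) equals the stable-1/2 bridge marginal density 1_{0<y≤z}(1/√(2π))(ct(T−t)/T) exp(−c²(Ty−tz)²/(2yz(z−y)))/(y−y²/z)^{3/2}; i.e., it does not depend on γ, so the bridge of an inverse-Gaussian process coincides in law with the bridge of a stable-1/2 subordinator. -/

import Mathlib

open Real Set

/-- Inverse-Gaussian density with parameters `c, γ > 0`: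
`q_t(x) = 1_{x>0} (ct/√(2π)) x^{−3/2} exp(−γ²(x − (c/γ)t)²/(2x))`. -/
noncomputable def igDen (c γ t x : ℝ) : ℝ :=
  if 0 < x then
    (c * t / Real.sqrt (2 * Real.pi)) * x ^ (-(3 : ℝ) / 2) *
      Real.exp (-(γ ^ 2 * (x - (c / γ) * t) ^ 2) / (2 * x))
  else 0

/-- Marginal density at time `t` of the stable-1/2 bridge from `0` at time `0` to `z`
at time `T`, with activity parameter `c`. -/
noncomputable def stableBridgeDen (c T t z y : ℝ) : ℝ :=
  if 0 < y ∧ y ≤ z then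
    (1 / Real.sqrt (2 * Real.pi)) * (c * t * (T - t) / T) *
      (Real.exp (-(c ^ 2 * (T * y - t * z) ^ 2) / (2 * y * z * (z - y))) /
        (y - y ^ 2 / z) ^ ((3 : ℝ) / 2))
  else 0

/-- The bridge marginal density of an inverse-Gaussian process coincides with the
stable-1/2 bridge marginal density; in particular it does not depend on `γ`, so the
bridge of an IG process is identical in law to the bridge of a stable-1/2
subordinator. -/
theorem ig_bridge_eq_stable_half_bridge (c γ T t z y : ℝ)
    (hc : 0 < c) (hγ : 0 < γ) (ht : 0 < t) (htT : t < T) (hz : 0 < z)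
    (hy0 : 0 < y) (hyz : y ≤ z) :
    igDen c γ t y * igDen c γ (T - t) (z - y) / igDen c γ T z
      = stableBridgeDen c T t z y := by
  rcases eq_or_lt_of_le hyz with rfl | hlt
  · -- boundary case `y = z`: both sides vanish
    have h0 : y - y ^ 2 / y = 0 := by rw [sq]; field_simp; ring
    simp [igDen, stableBridgeDen, h0, hy0,
      Real.zero_rpow (by norm_num : (3:ℝ)/2 ≠ 0)]
  · have hw : 0 < z - y := sub_pos.2 hlt
    have hT : 0 < T := ht.trans htT
    have hTt : 0 < T - t := sub_pos.2 htT
    have hs : (0:ℝ) < Real.sqrt (2 * Real.pi) := Real.sqrt_pos.2 (by positivity)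
    have hmem : 0 < y ∧ y ≤ z := ⟨hy0, hyz⟩
    simp only [igDen, stableBridgeDen, if_pos hy0, if_pos hw, if_pos hz, if_pos hmem]
    have hneg : ∀ x : ℝ, 0 ≤ x → x ^ (-(3:ℝ)/2) = (x ^ ((3:ℝ)/2))⁻¹ := by
      intro x hx
      rw [neg_div, Real.rpow_neg hx]
    rw [hneg y hy0.le, hneg (z - y) hw.le, hneg z hz.le]
    have hsplit : (y - y ^ 2 / z) = y * (z - y) / z := by field_simp
    rw [hsplit, Real.div_rpow (by positivity) hz.le, Real.mul_rpow hy0.le hw.le]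
    have hexp : Real.exp (-(γ ^ 2 * (y - c / γ * t) ^ 2) / (2 * y)) *
        Real.exp (-(γ ^ 2 * (z - y - c / γ * (T - t)) ^ 2) / (2 * (z - y))) /
        Real.exp (-(γ ^ 2 * (z - c / γ * T) ^ 2) / (2 * z))
        = Real.exp (-(c ^ 2 * (T * y - t * z) ^ 2) / (2 * y * z * (z - y))) := by
      rw [← Real.exp_add, ← Real.exp_sub]
      congr 1
      field_simp
      ring
    have hy32 : (0:ℝ) < y ^ ((3:ℝ)/2) := Real.rpow_pos_of_pos hy0 _
    have hw32 : (0:ℝ) < (z - y) ^ ((3:ℝ)/2) := Real.rpow_pos_of_pos hw _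
    have hz32 : (0:ℝ) < z ^ ((3:ℝ)/2) := Real.rpow_pos_of_pos hz _
    have he1 : (0:ℝ) < Real.exp (-(γ ^ 2 * (y - c / γ * t) ^ 2) / (2 * y)) :=
      Real.exp_pos _
    have he2 : (0:ℝ) < Real.exp (-(γ ^ 2 * (z - y - c / γ * (T - t)) ^ 2) / (2 * (z - y))) :=
      Real.exp_pos _
    have he3 : (0:ℝ) < Real.exp (-(γ ^ 2 * (z - c / γ * T) ^ 2) / (2 * z)) :=
      Real.exp_pos _
    rw [← hexp]
    generalize y ^ ((3:ℝ)/2) = A at hy32 ⊢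
    generalize (z - y) ^ ((3:ℝ)/2) = B at hw32 ⊢
    generalize z ^ ((3:ℝ)/2) = C at hz32 ⊢
    generalize Real.exp (-(γ ^ 2 * (y - c / γ * t) ^ 2) / (2 * y)) = E1 at he1 ⊢
    generalize Real.exp (-(γ ^ 2 * (z - y - c / γ * (T - t)) ^ 2) / (2 * (z - y))) = E2 at he2 ⊢
    generalize Real.exp (-(γ ^ 2 * (z - c / γ * T) ^ 2) / (2 * z)) = E3 at he3 ⊢
    field_simp
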